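/- Let S be a supercharacter theory of a finite group G, let K be an S-class, and let g ∈ K. Then for every basic S-character χ ∈ BCh(S) and every irreducible constituent ψ ∈ Irr(χ): ω_ψ(K̂) = |K|·χ(g) / χ(1). -/

import Mathlib

open scoped Classical

noncomputable section

/-- The set of irreducible complex characters of `G`, as functions `G → ℂ`. -/
def Irr (G : Type) [Group G] : Set (G → ℂ) :=
  {χ | ∃ V : FDRep ℂ G, CategoryTheory.Simple V ∧ χ = fun g => V.character g}

/-- For a set `X` of characters, `σ_X = ∑_{ψ ∈ X} ψ(1)·ψ`. -/
def sigmaChar {G : Type} [Group G] (X : Set (G → ℂ)) : G → ℂ :=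
  fun g => ∑ᶠ ψ ∈ X, ψ 1 * ψ g

/-- A supercharacter theory of a finite group `G`: a partition `parts` of `Irr G`
together with a partition `classes` of `G` such that `{1}` is a part,
the two partitions have the same number of parts, and each `σ_X` for `X ∈ parts`
is constant on each part of `classes`. -/
structure SuperCharTheory (G : Type) [Group G] [Fintype G] where
  parts : Set (Set (G → ℂ))
  classes : Set (Set G)
  parts_nonempty : ∀ X ∈ parts, X.Nonempty
  parts_disjoint : parts.PairwiseDisjoint id
  parts_cover : ⋃₀ parts = Irr G
  classes_nonempty : ∀ K ∈ classes, K.Nonempty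
  classes_disjoint : classes.PairwiseDisjoint id
  classes_cover : ⋃₀ classes = Set.univ
  one_mem : ({1} : Set G) ∈ classes
  card_eq : parts.ncard = classes.ncard
  sigma_const : ∀ X ∈ parts, ∀ K ∈ classes, ∀ g ∈ K, ∀ h ∈ K,
    sigmaChar X g = sigmaChar X h

/-- The set of basic `S`-characters (supercharacters) of a supercharacter theory. -/
def BCh {G : Type} [Group G] [Fintype G] (S : SuperCharTheory G) : Set (G → ℂ) :=
  sigmaChar '' S.parts

/-- The superclass sum `K̂ = ∑_{g ∈ K} g` in the complex group algebra. -/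
def classSum {G : Type} [Group G] (K : Set G) : MonoidAlgebra ℂ G :=
  ∑ᶠ g ∈ K, MonoidAlgebra.of ℂ G g



/-! ### Auxiliary development -/

section MatrixLemmas
open Polynomial

private lemma SCT.eval_charpoly_diag {d : ℕ} (M : Matrix (Fin d) (Fin d) ℂ) (μ : ℂ) :
    M.charpoly.eval μ = (Matrix.diagonal (fun _ => μ) - M).det := by
  rw [Matrix.charpoly, ← Polynomial.coe_evalRingHom, RingHom.map_det]
  congr 1
  ext i j
  rcases eq_or_ne i j with rfl | h
  · simp [Matrix.charmatrix_apply_eq]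
  · simp [Matrix.charmatrix_apply_ne _ _ _ h, Matrix.diagonal_apply_ne _ h]


private lemma SCT.root_pow_eq_one {d N : ℕ} (M : Matrix (Fin d) (Fin d) ℂ) (hpow : M ^ N = 1)
    (μ : ℂ) (hμ : μ ∈ M.charpoly.roots) : μ ^ N = 1 := by
  have hroot : M.charpoly.eval μ = 0 := by
    have := Polynomial.isRoot_of_mem_roots hμ
    exact this
  rw [SCT.eval_charpoly_diag] at hroot
  obtain ⟨v, hv, hmv⟩ := (Matrix.exists_mulVec_eq_zero_iff).2 hroot
  have hMv : M.mulVec v = μ • v := by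
    have h1 : (Matrix.diagonal (fun _ => μ) - M).mulVec v =
        μ • v - M.mulVec v := by
      rw [Matrix.sub_mulVec]
      congr 1
      simp [Matrix.diagonal_mulVec_single]  -- may not work
    rw [h1] at hmv
    linear_combination (norm := module) -hmv
  have hpowv : ∀ k : ℕ, (M ^ k).mulVec v = μ ^ k • v := by
    intro k
    induction k with
    | zero => simp
    | succ k ih =>
      rw [pow_succ, pow_succ, ← Matrix.mulVec_mulVec, hMv, Matrix.mulVec_smul, ih,
        smul_smul, mul_comm]
  have := hpowv N
  rw [hpow] at this
  simp at this
  -- this : v = μ ^ N • v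
  by_contra hne
  apply hv
  have : (μ ^ N - 1) • v = 0 := by
    rw [sub_smul, ← this, one_smul, sub_self]
  rcases smul_eq_zero.1 this with h | h
  · exact absurd (by linear_combination h) hne
  · exact absurd h hv


private lemma SCT.conj_of_pow_eq_one {N : ℕ} (hN : N ≠ 0) {μ : ℂ} (h : μ ^ N = 1) :
    (starRingEnd ℂ) μ = μ⁻¹ := by
  have habs : ‖μ‖ = 1 := by
    have h1 : ‖μ‖ ^ N = 1 := by rw [← norm_pow, h, norm_one]
    have h0 : (0:ℝ) ≤ ‖μ‖ := norm_nonneg μ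
    rcases lt_trichotomy (‖μ‖) 1 with hlt | he | hgt
    · exact absurd h1 (by have := pow_lt_one₀ h0 hlt hN; linarith)
    · exact he
    · exact absurd h1 (by have := one_lt_pow₀ hgt hN; linarith)
  have hne : μ ≠ 0 := by
    intro h0; rw [h0, zero_pow hN] at h; exact zero_ne_one h
  have : (starRingEnd ℂ) μ * μ = 1 := by
    rw [mul_comm, Complex.mul_conj, ← Complex.sq_norm, habs]; norm_num
  field_simp at this ⊢
  linear_combination this


private lemma SCT.eval_charpoly_smul {d : ℕ} (M : Matrix (Fin d) (Fin d) ℂ) (μ : ℂ) :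
    M.charpoly.eval μ = (μ • 1 - M).det := by
  rw [Matrix.charpoly, ← Polynomial.coe_evalRingHom, RingHom.map_det]
  congr 1
  ext i j
  rcases eq_or_ne i j with rfl | h
  · simp [Matrix.charmatrix_apply_eq, Matrix.one_apply_eq]
  · simp [Matrix.charmatrix_apply_ne _ _ _ h, Matrix.one_apply_ne h]


private lemma SCT.trace_inv_conj {d N : ℕ} (hN : N ≠ 0) (M M' : Matrix (Fin d) (Fin d) ℂ)
    (hpow : M ^ N = 1) (hM' : M' * M = 1) :
    M'.trace = (starRingEnd ℂ) M.trace := by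
  set r : Multiset ℂ := M.charpoly.roots with hr
  have hsplit : M.charpoly.Splits := IsAlgClosed.splits _
  have hmonic := M.charpoly_monic
  have hcard : Multiset.card r = d := by
    rw [hr, (Polynomial.splits_iff_card_roots).mp hsplit, Matrix.charpoly_natDegree_eq_dim,
      Fintype.card_fin]
  have hroots1 : ∀ μ ∈ r, μ ^ N = 1 := fun μ hμ => SCT.root_pow_eq_one M hpow μ hμ
  have hroots0 : ∀ μ ∈ r, μ ≠ 0 := by
    intro μ hμ h0
    have := hroots1 μ hμ
    rw [h0, zero_pow hN] at this
    exact zero_ne_one this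
  have hdetM : M.det = r.prod := Matrix.det_eq_prod_roots_charpoly_of_splits hsplit
  have hdet0 : M.det ≠ 0 := by
    intro h0
    have : M.det ^ N = 1 := by rw [← Matrix.det_pow, hpow, Matrix.det_one]
    rw [h0, zero_pow hN] at this
    exact zero_ne_one this
  have hfac : M.charpoly = (r.map fun a => X - C a).prod :=
    hsplit.eq_prod_roots_of_monic hmonic
  set q : ℂ[X] := ((r.map (·⁻¹)).map fun a => X - C a).prod with hq
  have hrid : r.prod = (r.map (fun a => a)).prod := by rw [Multiset.map_id']
  have hkey : ∀ x : ℂ, x ≠ 0 →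
      M'.charpoly.eval x * M.det = q.eval x * M.det := by
    intro x hx
    have lhs : M'.charpoly.eval x * M.det = (x • M - 1).det := by
      rw [SCT.eval_charpoly_smul, ← Matrix.det_mul, sub_mul, Matrix.smul_mul, Matrix.one_mul, hM']
    have rhs : q.eval x * M.det = (r.map fun a => a * x - 1).prod := by
      rw [hq, Polynomial.eval_multiset_prod, Multiset.map_map, Multiset.map_map, hdetM, hrid,
        ← Multiset.prod_map_mul]
      congr 1
      apply Multiset.map_congr rfl
      intro a ha
      simp only [Function.comp_apply, eval_sub, eval_X, eval_C]
      field_simp [hroots0 a ha]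
    have mid : (x • M - 1).det = (r.map fun a => a * x - 1).prod := by
      have h1 : x • M - 1 = (-x) • ((x⁻¹ • (1 : Matrix (Fin d) (Fin d) ℂ)) - M) := by
        rw [smul_sub, smul_smul, neg_mul, mul_inv_cancel₀ hx, neg_smul, one_smul, neg_smul,
          sub_neg_eq_add]
        abel
      rw [h1, Matrix.det_smul, ← SCT.eval_charpoly_smul, hfac, Polynomial.eval_multiset_prod,
        Multiset.map_map, Fintype.card_fin]
      rw [show (-x) ^ d = ((r.map fun _ => -x)).prod by
        rw [Multiset.map_const', Multiset.prod_replicate, hcard]]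
      rw [← Multiset.prod_map_mul]
      congr 1
      apply Multiset.map_congr rfl
      intro a ha
      simp only [Function.comp_apply, eval_sub, eval_X, eval_C]
      field_simp
      ring
    rw [lhs, rhs, mid]
  have hkey2 : M'.charpoly = q := by
    have hinf : ({x : ℂ | x ≠ 0}).Infinite := by
      have : {x : ℂ | x ≠ 0} = ({0} : Set ℂ)ᶜ := by ext x; simp
      rw [this]
      exact (Set.finite_singleton (0:ℂ)).infinite_compl
    have hpoly : M'.charpoly * C M.det - q * C M.det = 0 := by
      apply Polynomial.eq_zero_of_infinite_isRoot
      apply Set.Infinite.mono _ hinf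
      intro x hx
      simp only [Set.mem_setOf_eq, IsRoot.def, eval_sub, eval_mul, eval_C]
      rw [sub_eq_zero]
      exact hkey x hx
    have := sub_eq_zero.mp hpoly
    exact mul_right_cancel₀ (Polynomial.C_ne_zero.mpr hdet0) this
  have hsplit' : M'.charpoly.Splits := IsAlgClosed.splits _
  have htr' : M'.trace = (r.map (·⁻¹)).sum := by
    rw [Matrix.trace_eq_sum_roots_charpoly_of_splits hsplit', hkey2, hq,
      Polynomial.roots_multiset_prod_X_sub_C]
  have htr : (starRingEnd ℂ) M.trace = (r.map (·⁻¹)).sum := by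
    rw [Matrix.trace_eq_sum_roots_charpoly_of_splits hsplit, ← hr, map_multiset_sum]
    congr 1
    apply Multiset.map_congr rfl
    intro a ha
    exact SCT.conj_of_pow_eq_one hN (hroots1 a ha)
  rw [htr', htr]

end MatrixLemmas


section CharTheory
open FDRep CategoryTheory Module

variable {G : Type} [Group G] [Fintype G]


private lemma SCT.char_inv_conj {G : Type} [Group G] [Fintype G] (V : FDRep ℂ G) (g : G) :
    V.character g⁻¹ = (starRingEnd ℂ) (V.character g) := by
  classical
  set d := finrank ℂ V with hd
  let b : Basis (Fin d) ℂ V := Module.finBasis ℂ V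
  set M : Matrix (Fin d) (Fin d) ℂ := LinearMap.toMatrix b b (V.ρ g) with hM
  set M' : Matrix (Fin d) (Fin d) ℂ := LinearMap.toMatrix b b (V.ρ g⁻¹) with hM'
  have hmul : M' * M = 1 := by
    rw [hM, hM', ← LinearMap.toMatrix_comp b b b, ← Module.End.mul_eq_comp, ← map_mul,
      inv_mul_cancel, map_one, LinearMap.toMatrix_one]
  have hpow : M ^ (Fintype.card G) = 1 := by
    have h1 : V.ρ g ^ (Fintype.card G) = 1 := by
      rw [← map_pow, pow_card_eq_one, map_one]
    calc M ^ (Fintype.card G)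
        = LinearMap.toMatrix b b (V.ρ g ^ Fintype.card G) := by
          rw [hM]
          induction (Fintype.card G) with
          | zero => simp [LinearMap.toMatrix_one]
          | succ k ih =>
            rw [pow_succ, pow_succ, ih, ← LinearMap.toMatrix_comp b b b,
              Module.End.mul_eq_comp]
      _ = 1 := by rw [h1, LinearMap.toMatrix_one]
  have hN : Fintype.card G ≠ 0 := Fintype.card_ne_zero
  have := SCT.trace_inv_conj hN M M' hpow hmul
  rwa [hM, hM', ← LinearMap.trace_eq_matrix_trace, ← LinearMap.trace_eq_matrix_trace] at this


private lemma SCT.simple_finrank_pos (V : FDRep ℂ G) (hV : Simple V) : 0 < finrank ℂ V := by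
  by_contra h
  push_neg at h
  have h0 : finrank ℂ V = 0 := Nat.le_zero.mp h
  have hsub : Subsingleton V := by
    rw [← Module.finrank_zero_iff (R := ℂ) (M := V)]
    exact h0
  refine CategoryTheory.id_nonzero V ?_
  haveI : Subsingleton ↑V.V.obj := hsub
  apply Action.hom_ext
  ext v
  exact Subsingleton.elim _ _

private lemma SCT.irr_one {ψ : G → ℂ} (hψ : ψ ∈ Irr G) : ∃ m : ℕ, m ≠ 0 ∧ ψ 1 = m := by
  obtain ⟨V, hV, rfl⟩ := hψ
  exact ⟨finrank ℂ V, (SCT.simple_finrank_pos V hV).ne', by simpa using V.char_one⟩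

private lemma SCT.irr_one_ne_zero {ψ : G → ℂ} (hψ : ψ ∈ Irr G) : ψ 1 ≠ 0 := by
  obtain ⟨m, hm, h⟩ := SCT.irr_one hψ
  rw [h]
  exact_mod_cast hm

private lemma SCT.irr_class_fn {ψ : G → ℂ} (hψ : ψ ∈ Irr G) (g h : G) : ψ (h * g * h⁻¹) = ψ g := by
  obtain ⟨V, hV, rfl⟩ := hψ
  exact V.char_conj g h


private lemma SCT.irr_inv {ψ : G → ℂ} (hψ : ψ ∈ Irr G) (g : G) : ψ g⁻¹ = (starRingEnd ℂ) (ψ g) := by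
  obtain ⟨V, hV, rfl⟩ := hψ
  exact SCT.char_inv_conj V g


private lemma SCT.irr_pairing {ψ φ : G → ℂ} (hψ : ψ ∈ Irr G) (hφ : φ ∈ Irr G) :
    (Fintype.card G : ℂ)⁻¹ * ∑ g : G, ψ g * φ g⁻¹ = if ψ = φ then 1 else 0 := by
  obtain ⟨V, hV, rfl⟩ := hψ
  obtain ⟨W, hW, rfl⟩ := hφ
  letI : Fintype G := ‹Fintype G›
  haveI : Invertible (Nat.card G : ℂ) :=
    invertibleOfNonzero ((Nat.cast_ne_zero (R := ℂ)).mpr Nat.card_pos.ne')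
  by_cases h : (fun g : G => V.character g) = fun g : G => W.character g
  · rw [if_pos h, ← h]
    have := FDRep.char_orthonormal (k := ℂ) (G := G) V V
    rw [if_pos ⟨Iso.refl V⟩] at this
    simpa [Nat.card_eq_fintype_card] using this
  · rw [if_neg h]
    have := FDRep.char_orthonormal (k := ℂ) (G := G) V W
    rw [if_neg (fun ⟨i⟩ => h (by funext g; exact congrFun (FDRep.char_iso i) g))] at this
    simpa [Nat.card_eq_fintype_card] using this


/-- The pairing functional `f ↦ |G|⁻¹ ∑_g f g · φ(g⁻¹)` as a linear map. -/
private def SCT.pairF (φ : G → ℂ) : (G → ℂ) →ₗ[ℂ] ℂ where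
  toFun f := (Fintype.card G : ℂ)⁻¹ * ∑ g : G, f g * φ g⁻¹
  map_add' f₁ f₂ := by
    simp only [Pi.add_apply, add_mul, Finset.sum_add_distrib, mul_add]
  map_smul' a f := by
    simp only [Pi.smul_apply, smul_eq_mul, RingHom.id_apply, Finset.mul_sum]
    congr 1
    ext g
    ring

private lemma SCT.pairF_irr {ψ φ : G → ℂ} (hψ : ψ ∈ Irr G) (hφ : φ ∈ Irr G) :
    SCT.pairF φ ψ = if ψ = φ then 1 else 0 := SCT.irr_pairing hψ hφ

private lemma SCT.irr_linearIndependent : LinearIndependent ℂ (fun ψ : Irr G => (ψ : G → ℂ)) := by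
  rw [linearIndependent_iff]
  intro l hl
  ext ψ0
  have h0 := congrArg (SCT.pairF (ψ0 : G → ℂ)) hl
  rw [map_zero, Finsupp.linearCombination_apply, Finsupp.sum, map_sum] at h0
  simp only [map_smul, smul_eq_mul] at h0
  have hterm : ∀ i ∈ l.support, l i * SCT.pairF (ψ0 : G → ℂ) (i : G → ℂ) =
      if i = ψ0 then l i else 0 := by
    intro i _
    rw [SCT.pairF_irr i.2 ψ0.2, mul_ite, mul_one, mul_zero]
    simp only [Subtype.coe_inj]
  rw [Finset.sum_congr rfl hterm, Finset.sum_ite_eq' l.support ψ0 (fun i => l i)] at h0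
  by_cases h : ψ0 ∈ l.support
  · rw [if_pos h] at h0; rw [Finsupp.coe_zero, Pi.zero_apply]; exact h0
  · simpa using Finsupp.notMem_support_iff.mp h

private lemma SCT.irr_finite (G : Type) [Group G] [Fintype G] : (Irr G).Finite := LinearIndependent.setFinite SCT.irr_linearIndependent

private lemma SCT.pairF_sigma {X : Set (G → ℂ)} (hXI : X ⊆ Irr G) {φ : G → ℂ} (hφ : φ ∈ Irr G) :
    SCT.pairF φ (sigmaChar X) = if φ ∈ X then φ 1 else 0 := by
  have hXf : X.Finite := (SCT.irr_finite G).subset hXI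
  have hσ : sigmaChar X = ∑ ψ ∈ hXf.toFinset, (fun x => ψ 1 * ψ x) := by
    funext x
    rw [sigmaChar, finsum_mem_eq_finite_toFinset_sum _ hXf]
    simp
  rw [hσ, map_sum]
  rw [Finset.sum_congr rfl (fun ψ hmem => by
    have hψI : ψ ∈ Irr G := hXI (hXf.mem_toFinset.mp hmem)
    show SCT.pairF φ ((ψ 1) • ψ) = if ψ = φ then φ 1 else 0
    rw [map_smul, SCT.pairF_irr hψI hφ, smul_eq_mul, mul_ite, mul_one, mul_zero]
    rcases eq_or_ne ψ φ with rfl | h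
    · simp
    · simp [h])]
  rw [Finset.sum_ite_eq' hXf.toFinset φ (fun _ => φ 1)]
  rcases em (φ ∈ X) with h | h
  · rw [if_pos (hXf.mem_toFinset.mpr h), if_pos h]
  · rw [if_neg (fun hc => h (hXf.mem_toFinset.mp hc)), if_neg h]


private lemma SCT.sigma_apply {X : Set (G → ℂ)} (hXf : X.Finite) (g : G) :
    sigmaChar X g = ∑ ψ ∈ hXf.toFinset, ψ 1 * ψ g := by
  rw [sigmaChar, finsum_mem_eq_finite_toFinset_sum _ hXf]

private lemma SCT.sigma_conj {X : Set (G → ℂ)} (hXI : X ⊆ Irr G) (g h : G) :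
    sigmaChar X (h * g * h⁻¹) = sigmaChar X g := by
  have hXf := (SCT.irr_finite G).subset hXI
  rw [SCT.sigma_apply hXf, SCT.sigma_apply hXf]
  exact Finset.sum_congr rfl fun ψ hmem => by
    rw [SCT.irr_class_fn (hXI (hXf.mem_toFinset.mp hmem)) g h]


/-- The indicator function of a subset of `G`. -/
private def SCT.ind {G : Type} (K : Set G) : G → ℂ := fun x => if x ∈ K then 1 else 0


namespace SuperCharTheory
variable (S : SuperCharTheory G)

lemma classes_finite : S.classes.Finite := Set.toFinite _

lemma classes_ncard_pos : 0 < S.classes.ncard := by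
  rw [Set.ncard_pos S.classes_finite]
  exact ⟨_, S.one_mem⟩

lemma parts_finite : S.parts.Finite := by
  by_contra h
  have h0 : S.parts.ncard = 0 := Set.Infinite.ncard h
  have h1 := S.card_eq
  have h2 := S.classes_ncard_pos
  omega

lemma mem_parts_subset_irr {X : Set (G → ℂ)} (hX : X ∈ S.parts) : X ⊆ Irr G := by
  intro ψ hψ
  rw [← S.parts_cover]
  exact ⟨X, hX, hψ⟩

/-- The submodule of superclass functions. -/
def scFun : Submodule ℂ (G → ℂ) where
  carrier := {f | ∀ K ∈ S.classes, ∀ g ∈ K, ∀ h ∈ K, f g = f h}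
  add_mem' := fun hf hg K hK a ha b hb => by
    simp only [Pi.add_apply, hf K hK a ha b hb, hg K hK a ha b hb]
  zero_mem' := fun K hK a ha b hb => rfl
  smul_mem' := fun c f hf K hK a ha b hb => by
    simp only [Pi.smul_apply, hf K hK a ha b hb]

lemma ind_mem_scFun {K : Set G} (hK : K ∈ S.classes) : SCT.ind K ∈ S.scFun := by
  intro L hL a ha b hb
  unfold SCT.ind
  rcases eq_or_ne L K with rfl | h
  · rw [if_pos ha, if_pos hb]
  · have hd : Disjoint L K := S.classes_disjoint hL hK h
    rw [if_neg (fun hc => (Set.disjoint_left.mp hd) ha hc),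
      if_neg (fun hc => (Set.disjoint_left.mp hd) hb hc)]

lemma sigma_mem_scFun {X : Set (G → ℂ)} (hX : X ∈ S.parts) : sigmaChar X ∈ S.scFun :=
  fun K hK a ha b hb => S.sigma_const X hX K hK a ha b hb

/-- every superclass function is a combination of the `sigmaChar`s -/
lemma exists_combo [Fintype ↥S.parts] (f : G → ℂ) (hf : f ∈ S.scFun) :
    ∃ c : ↥S.parts → ℂ, ∑ X : ↥S.parts, c X • sigmaChar (X : Set (G → ℂ)) = f := by
  haveI : Fintype ↥S.classes := S.classes_finite.fintype
  -- the indicator family is a basis of scFun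
  set e : ↥S.classes → ↥S.scFun :=
    fun K => ⟨SCT.ind (K : Set G), S.ind_mem_scFun K.2⟩ with he
  have he_li : LinearIndependent ℂ e := by
    rw [Fintype.linearIndependent_iff]
    intro c hc K0
    have := congrFun (congrArg (fun (w : ↥S.scFun) => (w : G → ℂ)) hc)
      (S.classes_nonempty _ K0.2).choose
    have hg0 := (S.classes_nonempty _ K0.2).choose_spec
    simp only [Submodule.coe_sum, Submodule.coe_smul, Finset.sum_apply, Pi.smul_apply,
      smul_eq_mul, he, SCT.ind, Submodule.coe_zero, Pi.zero_apply] at this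
    rwa [Finset.sum_eq_single K0
      (fun K _ hne => by
        rw [if_neg, mul_zero]
        intro hc2
        have hd : Disjoint (K : Set G) (K0 : Set G) :=
          S.classes_disjoint K.2 K0.2 (fun h => hne (Subtype.ext h))
        exact (Set.disjoint_left.mp hd) hc2 hg0)
      (fun h => absurd (Finset.mem_univ K0) h), if_pos hg0, mul_one] at this
  have he_span : ⊤ ≤ Submodule.span ℂ (Set.range e) := by
    intro w _
    rw [Submodule.mem_span_range_iff_exists_fun]
    refine ⟨fun K => (w : G → ℂ) (S.classes_nonempty _ K.2).choose, ?_⟩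
    apply Subtype.ext
    rw [Submodule.coe_sum]
    funext x
    have hx : x ∈ ⋃₀ S.classes := by rw [S.classes_cover]; trivial
    obtain ⟨K0, hK0, hxK0⟩ := hx
    rw [Finset.sum_apply]
    rw [Finset.sum_eq_single (⟨K0, hK0⟩ : ↥S.classes)
      (fun K _ hne => by
        have hd : Disjoint (K : Set G) K0 :=
          S.classes_disjoint K.2 hK0 (fun h => hne (Subtype.ext h))
        simp only [Submodule.coe_smul, Pi.smul_apply, smul_eq_mul, he, SCT.ind]
        rw [if_neg (fun hc => (Set.disjoint_left.mp hd) hc hxK0), mul_zero])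
      (fun h => absurd (Finset.mem_univ _) h)]
    simp only [Submodule.coe_smul, Pi.smul_apply, smul_eq_mul, he, SCT.ind]
    rw [if_pos hxK0, mul_one]
    exact ((w : ↥S.scFun).2 K0 hK0 _ (S.classes_nonempty _ hK0).choose_spec x hxK0)
  -- basis and dimension count
  let b : Basis ↥S.classes ℂ ↥S.scFun := Basis.mk he_li he_span
  have hfr : finrank ℂ ↥S.scFun = Fintype.card ↥S.classes :=
    (Module.finrank_eq_card_basis b)
  -- the sigma family
  have hσli_amb : LinearIndependent ℂ (fun X : ↥S.parts => sigmaChar (X : Set (G → ℂ))) := by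
    rw [Fintype.linearIndependent_iff]
    intro d hd X0
    obtain ⟨ψ0, hψ0X⟩ := S.parts_nonempty _ X0.2
    have hψ0I : ψ0 ∈ Irr G := S.mem_parts_subset_irr X0.2 hψ0X
    have h0 := congrArg (SCT.pairF ψ0) hd
    rw [map_zero, map_sum] at h0
    simp only [map_smul, smul_eq_mul] at h0
    rw [Finset.sum_congr rfl (fun X _ => by
      rw [SCT.pairF_sigma (S.mem_parts_subset_irr X.2) hψ0I])] at h0
    rw [Finset.sum_eq_single X0
      (fun X _ hne => by
        have hd2 : Disjoint (X : Set (G → ℂ)) (X0 : Set (G → ℂ)) :=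
          S.parts_disjoint X.2 X0.2 (fun h => hne (Subtype.ext h))
        rw [if_neg (fun hc => (Set.disjoint_left.mp hd2) hc hψ0X), mul_zero])
      (fun h => absurd (Finset.mem_univ _) h), if_pos hψ0X] at h0
    exact (mul_eq_zero.mp h0).resolve_right (SCT.irr_one_ne_zero hψ0I)
  let σ' : ↥S.parts → ↥S.scFun := fun X => ⟨sigmaChar ↑X, S.sigma_mem_scFun X.2⟩
  have hσli : LinearIndependent ℂ σ' :=
    LinearIndependent.of_comp S.scFun.subtype hσli_amb
  have hcard : Fintype.card ↥S.parts = finrank ℂ ↥S.scFun := by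
    rw [hfr, ← Set.toFinset_card, ← Set.toFinset_card, ← Set.ncard_eq_toFinset_card',
      ← Set.ncard_eq_toFinset_card']
    exact S.card_eq
  have hspan := hσli.span_eq_top_of_card_eq_finrank' hcard
  have hw : (⟨f, hf⟩ : ↥S.scFun) ∈ Submodule.span ℂ (Set.range σ') := by
    rw [hspan]; trivial
  rw [Submodule.mem_span_range_iff_exists_fun] at hw
  obtain ⟨c, hc⟩ := hw
  refine ⟨c, ?_⟩
  have := congrArg (fun (w : ↥S.scFun) => (w : G → ℂ)) hc
  simp only [Submodule.coe_sum, Submodule.coe_smul] at this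
  exact this

end SuperCharTheory

private lemma SCT.classSum_union {A B : Set G} (h : Disjoint A B) :
    classSum (A ∪ B) = classSum A + classSum B := by
  unfold classSum
  exact finsum_mem_union h (Set.toFinite A) (Set.toFinite B)

private lemma SCT.sum_const_of_conj {ψ : G → ℂ} (hψ : ψ ∈ Irr G) (a : G) :
    ∑ x ∈ (Set.toFinite (conjugatesOf a)).toFinset, ψ x
      = ((conjugatesOf a).ncard : ℂ) * ψ a := by
  have hconst : ∀ x ∈ (Set.toFinite (conjugatesOf a)).toFinset, ψ x = ψ a := by
    intro x hx
    have hmem : x ∈ conjugatesOf a := (Set.Finite.mem_toFinset _).mp hx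
    obtain ⟨c, hc⟩ := isConj_iff.mp hmem
    rw [← hc, SCT.irr_class_fn hψ a c]
  rw [Finset.sum_congr rfl hconst, Finset.sum_const, nsmul_eq_mul,
    Set.ncard_eq_toFinset_card (conjugatesOf a)]

private lemma SCT.omega_stable {ψ : G → ℂ} (hψ : ψ ∈ Irr G) (ω : MonoidAlgebra ℂ G →ₗ[ℂ] ℂ)
    (hω : ∀ a : G, ω (classSum (conjugatesOf a)) = ((conjugatesOf a).ncard : ℂ) * ψ a / ψ 1) :
    ∀ T : Set G, (∀ a ∈ T, conjugatesOf a ⊆ T) →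
      ω (classSum T) = (ψ 1)⁻¹ * ∑ x ∈ (Set.toFinite T).toFinset, ψ x := by
  suffices H : ∀ (n : ℕ) (T : Set G), T.ncard = n → (∀ a ∈ T, conjugatesOf a ⊆ T) →
      ω (classSum T) = (ψ 1)⁻¹ * ∑ x ∈ (Set.toFinite T).toFinset, ψ x by
    exact fun T hT => H T.ncard T rfl hT
  intro n
  induction n using Nat.strong_induction_on with
  | _ n ih =>
    intro T hn hstab
    rcases eq_or_ne n 0 with rfl | hne
    · have hT : T = ∅ := (Set.ncard_eq_zero (Set.toFinite T)).mp hn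
      subst hT
      have h1 : classSum (∅ : Set G) = 0 := finsum_mem_empty
      rw [h1, map_zero]
      have h2 : (Set.toFinite (∅ : Set G)).toFinset = ∅ :=
        (Set.Finite.toFinset_eq_empty).mpr rfl
      rw [h2, Finset.sum_empty, mul_zero]
    · obtain ⟨a, ha⟩ := Set.nonempty_of_ncard_ne_zero (hn ▸ hne)
      set L := conjugatesOf a with hL
      have hLsub : L ⊆ T := hstab a ha
      have haL : a ∈ L := mem_conjugatesOf_self
      have hdisj : Disjoint L (T \ L) := Set.disjoint_sdiff_right
      have hTsplit : T = L ∪ (T \ L) := (Set.union_diff_cancel hLsub).symm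
      have hLncard : 0 < L.ncard := by
        rw [Set.ncard_pos (Set.toFinite L)]; exact ⟨a, haL⟩
      have hdiffcard : (T \ L).ncard < n := by
        rw [← hn, Set.ncard_diff hLsub]
        have : L.ncard ≤ T.ncard := Set.ncard_le_ncard hLsub
        omega
      have hdiffstab : ∀ b ∈ T \ L, conjugatesOf b ⊆ T \ L := by
        rintro b ⟨hbT, hbL⟩ y hy
        refine ⟨hstab b hbT hy, fun hyL => hbL ?_⟩
        exact ((hyL : IsConj a y).trans (IsConj.symm (hy : IsConj b y)) : IsConj a b)
      have step : classSum T = classSum L + classSum (T \ L) := by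
        conv_lhs => rw [hTsplit]
        exact SCT.classSum_union hdisj
      rw [step, map_add, hω a, ih _ hdiffcard (T \ L) rfl hdiffstab]
      have hsplitSum : ∑ x ∈ (Set.toFinite T).toFinset, ψ x =
          (∑ x ∈ (Set.toFinite L).toFinset, ψ x) +
          ∑ x ∈ (Set.toFinite (T \ L)).toFinset, ψ x := by
        rw [← Finset.sum_union (by
          rw [Finset.disjoint_left]
          intro x hx1 hx2
          exact Set.disjoint_left.mp hdisj ((Set.Finite.mem_toFinset _).mp hx1)
            ((Set.Finite.mem_toFinset _).mp hx2))]
        apply Finset.sum_congr _ (fun _ _ => rfl)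
        ext x
        simp only [Finset.mem_union, Set.Finite.mem_toFinset]
        constructor
        · intro hx
          rcases em (x ∈ L) with h | h
          · exact Or.inl h
          · exact Or.inr ⟨hx, h⟩
        · rintro (h | ⟨h, _⟩)
          · exact hLsub h
          · exact h
      rw [hsplitSum, mul_add, ← SCT.sum_const_of_conj hψ a]
      congr 1
      rw [div_eq_inv_mul, SCT.sum_const_of_conj hψ a]

private lemma SCT.pairF_ind (K : Set G) (φ : G → ℂ) :
    SCT.pairF φ (SCT.ind K) =
      (Fintype.card G : ℂ)⁻¹ * ∑ x ∈ (Set.toFinite K).toFinset, φ x⁻¹ := by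
  rw [SCT.pairF]
  simp only [LinearMap.coe_mk, AddHom.coe_mk]
  congr 1
  rw [Finset.sum_congr rfl (fun g _ => by
    show SCT.ind K g * φ g⁻¹ = if g ∈ K then φ g⁻¹ else 0
    unfold SCT.ind
    split_ifs <;> simp)]
  rw [← Finset.sum_filter]
  apply Finset.sum_congr _ (fun _ _ => rfl)
  ext x
  simp only [Finset.mem_filter, Finset.mem_univ, true_and, Set.Finite.mem_toFinset]

end CharTheory

/-- **Lemma (ω on superclass sums).** Let `S` be a supercharacter theory of `G`, `K` an
`S`-class and `g ∈ K`.  For every irreducible character `ψ` (with `ω ψ` the central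
character, the linear functional satisfying `ω_ψ(L̂) = |L|·ψ(a)/ψ(1)` for each conjugacy
class `L = conjugatesOf a`), if `ψ` is a constituent of the basic `S`-character
`χ = σ_X`, then `ω_ψ(K̂) = |K|·χ(g)/χ(1)`. -/
theorem omega_on_superclass {G : Type} [Group G] [Fintype G]
    (S : SuperCharTheory G)
    (ω : (G → ℂ) → (MonoidAlgebra ℂ G →ₗ[ℂ] ℂ))
    (hω : ∀ ψ ∈ Irr G, ∀ a : G,
      ω ψ (classSum (conjugatesOf a)) = ((conjugatesOf a).ncard : ℂ) * ψ a / ψ 1)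
    (K : Set G) (hK : K ∈ S.classes) (g : G) (hg : g ∈ K)
    (X : Set (G → ℂ)) (hX : X ∈ S.parts) (ψ : G → ℂ) (hψ : ψ ∈ X) :
    ω ψ (classSum K) = (K.ncard : ℂ) * sigmaChar X g / sigmaChar X 1 := by
  haveI : Fintype ↥S.parts := S.parts_finite.fintype
  have hXI : X ⊆ Irr G := S.mem_parts_subset_irr hX
  have hψI : ψ ∈ Irr G := hXI hψ
  have hXf : X.Finite := (SCT.irr_finite G).subset hXI
  set X₀ : ↥S.parts := ⟨X, hX⟩ with hX₀
  obtain ⟨c, hc⟩ := S.exists_combo (SCT.ind K) (S.ind_mem_scFun hK)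
  have hptw : ∀ x : G, SCT.ind K x = ∑ X' : ↥S.parts, c X' * sigmaChar (X' : Set (G → ℂ)) x := by
    intro x
    have := congrFun hc x
    simp only [Finset.sum_apply, Pi.smul_apply, smul_eq_mul] at this
    exact this.symm
  -- K is conjugation-stable
  have hstab : ∀ a ∈ K, conjugatesOf a ⊆ K := by
    intro a ha y hy
    obtain ⟨u, hu⟩ := isConj_iff.mp (hy : IsConj a y)
    have h1 : SCT.ind K y = SCT.ind K a := by
      rw [hptw y, hptw a]
      exact Finset.sum_congr rfl fun X' _ => by
        rw [← hu, SCT.sigma_conj (S.mem_parts_subset_irr X'.2) a u]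
    by_contra hyK
    rw [SCT.ind, SCT.ind, if_neg hyK, if_pos ha] at h1
    exact zero_ne_one h1
  -- coefficient extraction through the pairing, then conjugation
  have hsum : ∀ φ ∈ X, ∑ x ∈ (Set.toFinite K).toFinset, φ x =
      ((Fintype.card G : ℂ) * (starRingEnd ℂ) (c X₀)) * φ 1 := by
    intro φ hφ
    have hφI : φ ∈ Irr G := hXI hφ
    have hcoef : (Fintype.card G : ℂ)⁻¹ * ∑ x ∈ (Set.toFinite K).toFinset, φ x⁻¹ =
        c X₀ * φ 1 := by
      rw [← SCT.pairF_ind K φ, ← hc, map_sum]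
      simp only [map_smul, smul_eq_mul]
      rw [Finset.sum_congr rfl (fun X' _ =>
        by rw [SCT.pairF_sigma (S.mem_parts_subset_irr X'.2) hφI])]
      rw [Finset.sum_eq_single X₀
        (fun X' _ hne => by
          have hd : Disjoint (X' : Set (G → ℂ)) X :=
            S.parts_disjoint X'.2 hX (fun h => hne (by rw [hX₀]; exact Subtype.ext h))
          rw [if_neg (fun hc2 => (Set.disjoint_left.mp hd) hc2 hφ), mul_zero])
        (fun h => absurd (Finset.mem_univ _) h)]
      rw [if_pos (show φ ∈ (X₀ : Set (G → ℂ)) from hφ)]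
    have hconj := congrArg (starRingEnd ℂ) hcoef
    obtain ⟨m, hm0, hm⟩ := SCT.irr_one hφI
    rw [map_mul, map_mul, map_inv₀, map_natCast, hm, map_natCast, map_sum] at hconj
    rw [Finset.sum_congr rfl (fun x _ => by
      rw [← SCT.irr_inv hφI, inv_inv] : ∀ x ∈ (Set.toFinite K).toFinset,
        (starRingEnd ℂ) (φ x⁻¹) = φ x)] at hconj
    have hcard0 : (Fintype.card G : ℂ) ≠ 0 := Nat.cast_ne_zero.mpr Fintype.card_ne_zero
    have h2 : (Fintype.card G : ℂ) * ((Fintype.card G : ℂ)⁻¹ *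
        ∑ x ∈ (Set.toFinite K).toFinset, φ x) =
        (Fintype.card G : ℂ) * ((starRingEnd ℂ) (c X₀) * (m : ℂ)) := by rw [hconj]
    rw [← mul_assoc, mul_inv_cancel₀ hcard0, one_mul] at h2
    rw [hm, h2]
    ring
  -- value of ω
  have hωval := SCT.omega_stable hψI (ω ψ) (hω ψ hψI) K hstab
  set γ : ℂ := (Fintype.card G : ℂ) * (starRingEnd ℂ) (c X₀) with hγ
  have hωγ : ω ψ (classSum K) = γ := by
    rw [hωval, hsum ψ hψ, mul_comm γ (ψ 1), ← mul_assoc,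
      inv_mul_cancel₀ (SCT.irr_one_ne_zero hψI), one_mul]
  -- two evaluations of the sum of σ_X over K
  have h1 : ∑ x ∈ (Set.toFinite K).toFinset, sigmaChar X x
      = (K.ncard : ℂ) * sigmaChar X g := by
    rw [Finset.sum_congr rfl (fun x hx =>
      S.sigma_const X hX K hK x ((Set.Finite.mem_toFinset _).mp hx) g hg),
      Finset.sum_const, nsmul_eq_mul, Set.ncard_eq_toFinset_card K]
  have h2 : ∑ x ∈ (Set.toFinite K).toFinset, sigmaChar X x = γ * sigmaChar X 1 := by
    rw [Finset.sum_congr rfl (fun x _ => SCT.sigma_apply hXf x), Finset.sum_comm,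
      SCT.sigma_apply hXf 1, Finset.mul_sum]
    apply Finset.sum_congr rfl
    intro φ hφmem
    have hφX : φ ∈ X := hXf.mem_toFinset.mp hφmem
    rw [← Finset.mul_sum, hsum φ hφX]
    ring
  -- nonvanishing of σ_X 1
  have hσ1 : sigmaChar X 1 ≠ 0 := by
    obtain ⟨φ0, hφ0⟩ := S.parts_nonempty X hX
    set mf : (G → ℂ) → ℕ := fun φ => if h : φ ∈ Irr G then (SCT.irr_one h).choose else 0 with hmf
    have hmm : ∀ φ ∈ X, φ 1 = (mf φ : ℂ) ∧ mf φ ≠ 0 := by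
      intro φ hφ
      have hI := hXI hφ
      simp only [hmf, dif_pos hI]
      exact ⟨(SCT.irr_one hI).choose_spec.2, (SCT.irr_one hI).choose_spec.1⟩
    have hcast : sigmaChar X 1 = ((∑ φ ∈ hXf.toFinset, mf φ * mf φ : ℕ) : ℂ) := by
      rw [SCT.sigma_apply hXf 1]
      push_cast
      exact Finset.sum_congr rfl fun φ hφ => by
        rw [(hmm φ (hXf.mem_toFinset.mp hφ)).1]
    rw [hcast]
    rw [Nat.cast_ne_zero]
    intro h0
    have := (Finset.sum_eq_zero_iff.mp h0) φ0 (hXf.mem_toFinset.mpr hφ0)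
    exact (hmm φ0 hφ0).2 (mul_self_eq_zero.mp this)
  rw [hωγ, ← h1, h2, mul_div_assoc, div_self hσ1, mul_one]
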